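/- Let a, b, c ∈ ℂ and let t, z ∈ ℂ satisfy t ∉ (−∞,0], 1−t ∉ (−∞,0] and t−z ∉ (−∞,0]. Define f(z,t) = t^{b−c} (1−t)^{c−a−1} (t−z)^{−b} using principal branches. Then the hypergeometric operator applied in the variable z to f equals a t-derivative: z(1−z) ∂_z² f(z,t) + (c−(a+b+1)z) ∂_z f(z,t) − a·b·f(z,t) = −b ∂_t [ t^{b−c+1} (1−t)^{c−a} (t−z)^{−b−1} ]. -/

import Mathlib

open Complex

/-- the hypergeometric operator applied in `z` to
`f(z,t) = t^(b-c) (1-t)^(c-a-1) (t-z)^(-b)` equals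
`-b ∂_t [ t^(b-c+1) (1-t)^(c-a) (t-z)^(-b-1) ]`. -/
theorem hypergeometric_integrand_identity (a b c : ℂ) (t z : ℂ)
    (ht : t ∈ Complex.slitPlane) (ht1 : (1 - t) ∈ Complex.slitPlane)
    (htz : (t - z) ∈ Complex.slitPlane) :
    z * (1 - z) *
        deriv (deriv (fun w : ℂ =>
          t ^ (b - c) * (1 - t) ^ (c - a - 1) * (t - w) ^ (-b))) z
      + (c - (a + b + 1) * z) *
        deriv (fun w : ℂ =>
          t ^ (b - c) * (1 - t) ^ (c - a - 1) * (t - w) ^ (-b)) z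
      - a * b * (t ^ (b - c) * (1 - t) ^ (c - a - 1) * (t - z) ^ (-b))
    = -b * deriv (fun s : ℂ =>
        s ^ (b - c + 1) * (1 - s) ^ (c - a) * (s - z) ^ (-b - 1)) t := by
  have ht0 : t ≠ 0 := slitPlane_ne_zero ht
  have ht10 : (1 - t) ≠ 0 := slitPlane_ne_zero ht1
  have htz0 : (t - z) ≠ 0 := slitPlane_ne_zero htz
  set C : ℂ := t ^ (b - c) * (1 - t) ^ (c - a - 1) with hC
  -- first derivative in w at any point where t - w ∈ slitPlane
  have key : ∀ w : ℂ, (t - w) ∈ Complex.slitPlane →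
      HasDerivAt (fun w : ℂ => C * (t - w) ^ (-b))
        (C * (b * (t - w) ^ (-b - 1))) w := by
    intro w hw
    have h0 : HasDerivAt (fun w : ℂ => t - w) (-1) w := by
      simpa using (hasDerivAt_id w).const_sub t
    have h1 := (h0.cpow_const (c := -b) hw).const_mul C
    exact h1.congr_deriv (by ring)
  have hd1 : deriv (fun w : ℂ => C * (t - w) ^ (-b)) z
      = C * (b * (t - z) ^ (-b - 1)) := (key z htz).deriv
  -- second derivative
  have hopen : IsOpen {w : ℂ | (t - w) ∈ Complex.slitPlane} :=
    isOpen_slitPlane.preimage (by continuity)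
  have hev : deriv (fun w : ℂ => C * (t - w) ^ (-b))
      =ᶠ[nhds z] (fun w : ℂ => C * b * (t - w) ^ (-b - 1)) := by
    filter_upwards [hopen.mem_nhds htz] with w hw
    have := (key w hw).deriv
    rw [this]; ring
  have key2 : HasDerivAt (fun w : ℂ => C * b * (t - w) ^ (-b - 1))
      (C * b * ((b + 1) * (t - z) ^ (-b - 1 - 1))) z := by
    have h0 : HasDerivAt (fun w : ℂ => t - w) (-1) z := by
      simpa using (hasDerivAt_id z).const_sub t
    have h1 := (h0.cpow_const (c := -b - 1) htz).const_mul (C * b)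
    exact h1.congr_deriv (by ring)
  have hd2 : deriv (deriv (fun w : ℂ => C * (t - w) ^ (-b))) z
      = C * b * ((b + 1) * (t - z) ^ (-b - 1 - 1)) := by
    rw [hev.deriv_eq]; exact key2.deriv
  -- RHS derivative
  have h1 : HasDerivAt (fun s : ℂ => s ^ (b - c + 1))
      ((b - c + 1) * t ^ (b - c + 1 - 1)) t := by
    simpa using (hasDerivAt_id t).cpow_const (c := b - c + 1) ht
  have h2 : HasDerivAt (fun s : ℂ => (1 - s) ^ (c - a))
      ((c - a) * (1 - t) ^ (c - a - 1) * (-1)) t := by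
    have h0 : HasDerivAt (fun s : ℂ => 1 - s) (-1) t := by
      simpa using (hasDerivAt_id t).const_sub 1
    exact h0.cpow_const (c := c - a) ht1
  have h3 : HasDerivAt (fun s : ℂ => (s - z) ^ (-b - 1))
      ((-b - 1) * (t - z) ^ (-b - 1 - 1) * 1) t := by
    have h0 : HasDerivAt (fun s : ℂ => s - z) 1 t := by
      simpa using (hasDerivAt_id t).sub_const z
    exact h0.cpow_const (c := -b - 1) htz
  have hR : deriv (fun s : ℂ =>
        s ^ (b - c + 1) * (1 - s) ^ (c - a) * (s - z) ^ (-b - 1)) t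
      = ((b - c + 1) * t ^ (b - c + 1 - 1) * (1 - t) ^ (c - a)
            + t ^ (b - c + 1) * ((c - a) * (1 - t) ^ (c - a - 1) * (-1)))
          * (t - z) ^ (-b - 1)
        + t ^ (b - c + 1) * (1 - t) ^ (c - a)
          * ((-b - 1) * (t - z) ^ (-b - 1 - 1) * 1) :=
    ((h1.mul h2).mul h3).deriv
  rw [hd1, hd2, hR, hC]
  -- rewrite all powers in terms of base powers
  have e1 : t ^ (b - c + 1) = t ^ (b - c) * t := by
    rw [cpow_add _ _ ht0, cpow_one]
  have e2 : t ^ (b - c + 1 - 1) = t ^ (b - c) := by ring_nf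
  have e3 : (1 - t) ^ (c - a) = (1 - t) ^ (c - a - 1) * (1 - t) := by
    rw [show c - a = (c - a - 1) + 1 by ring, cpow_add _ _ ht10, cpow_one]
    ring_nf
  have e4 : (t - z) ^ (-b - 1) = (t - z) ^ (-b - 1 - 1) * (t - z) := by
    rw [show -b - 1 = (-b - 1 - 1) + 1 by ring, cpow_add _ _ htz0, cpow_one]
    ring_nf
  have e5 : (t - z) ^ (-b) = (t - z) ^ (-b - 1 - 1) * (t - z) * (t - z) := by
    rw [show -b = (-b - 1 - 1) + 1 + 1 by ring, cpow_add _ _ htz0,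
      cpow_add _ _ htz0, cpow_one]
    ring_nf
  rw [e1, e2, e3, e4, e5]
  ring
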